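/- Let c_1,…,c_n be reals with c_1 = 0 and c_n = 1, and let d_1,…,d_n be reals with d_1 = d_n = 1 and d_i ≠ 0 for all i. Set A = F·D and Ã = T·(D·A·G)ᵀ·T. Then for every 1 ≤ i ≤ n, Σ_{j=1}^{n} Ã_{ij} = 1 − c_{n+1−i}; that is, the row sums of the c-reflected tableau Ã equal the reflected nodes c̃_i = 1 − c_{n+1−i}. -/

import Mathlib

open Finset Matrix
/-- The matrix `D` with entries `d_{ij}`: `0` for `i < j`, `d_i` for `i = j`, and
`-d_j · (∏_{k=j+1}^{i-1} (1 - d_k)) · d_i` for `i > j`. -/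
def Dmat (n : ℕ) (d : Fin n → ℝ) : Matrix (Fin n) (Fin n) ℝ :=
  Matrix.of fun i j =>
    if i < j then 0
    else if i = j then d i
    else -(d j) * (∏ k ∈ Finset.Ioo j i, (1 - d k)) * d i

/-- The lower-triangular matrix `G` with `G_{ii} = 1/d_i`, `G_{ij} = 1` for `i > j`. -/
noncomputable def Gmat (n : ℕ) (d : Fin n → ℝ) : Matrix (Fin n) (Fin n) ℝ :=
  Matrix.of fun i j => if i = j then 1 / d i else if j < i then 1 else 0

/-- The matrix `F` with `F_{ij} = c_i - c_j` for `i > j` and `0` otherwise. -/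
def Fmat (n : ℕ) (c : Fin n → ℝ) : Matrix (Fin n) (Fin n) ℝ :=
  Matrix.of fun i j => if j < i then c i - c j else 0

/-- The antidiagonal permutation matrix `T`, `T_{ij} = 1` iff `i + j = n + 1` (1-based). -/
def Tmat (n : ℕ) : Matrix (Fin n) (Fin n) ℝ :=
  Matrix.of fun i j => if (i : ℕ) + (j : ℕ) + 1 = n then 1 else 0

lemma tele_min {α : Type*} [LinearOrder α] (d : α → ℝ) (s : Finset α) :
    ∑ k ∈ s, d k * ∏ m ∈ s.filter (fun m => k < m), (1 - d m)
      = 1 - ∏ m ∈ s, (1 - d m) := by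
  classical
  induction s using Finset.induction_on_min with
  | empty => simp
  | insert a s ha ih =>
    have hnot : a ∉ s := fun h => lt_irrefl a (ha a h)
    have h1 : (insert a s).filter (fun m => a < m) = s := by
      rw [Finset.filter_insert, if_neg (lt_irrefl a)]
      exact Finset.filter_true_of_mem ha
    have h2 : ∀ k ∈ s, (insert a s).filter (fun m => k < m)
        = s.filter (fun m => k < m) := by
      intro k hk
      rw [Finset.filter_insert, if_neg (not_lt.2 (ha k hk).le)]
    rw [Finset.sum_insert hnot, Finset.prod_insert hnot, h1,
      Finset.sum_congr rfl (fun k hk => by rw [h2 k hk]), ih]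
    ring

lemma tele_max {α : Type*} [LinearOrder α] (d : α → ℝ) (s : Finset α) :
    ∑ k ∈ s, d k * ∏ m ∈ s.filter (fun m => m < k), (1 - d m)
      = 1 - ∏ m ∈ s, (1 - d m) := by
  classical
  induction s using Finset.induction_on_max with
  | empty => simp
  | insert a s ha ih =>
    have hnot : a ∉ s := fun h => lt_irrefl a (ha a h)
    have h1 : (insert a s).filter (fun m => m < a) = s := by
      rw [Finset.filter_insert, if_neg (lt_irrefl a)]
      exact Finset.filter_true_of_mem ha
    have h2 : ∀ k ∈ s, (insert a s).filter (fun m => m < k)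
        = s.filter (fun m => m < k) := by
      intro k hk
      rw [Finset.filter_insert, if_neg (not_lt.2 (ha k hk).le)]
    rw [Finset.sum_insert hnot, Finset.prod_insert hnot, h1,
      Finset.sum_congr rfl (fun k hk => by rw [h2 k hk]), ih]
    ring

lemma DG_eq_one (n : ℕ) (d : Fin n → ℝ) (hd : ∀ i, d i ≠ 0) :
    Dmat n d * Gmat n d = 1 := by
  ext i j
  rw [Matrix.mul_apply]
  rcases lt_trichotomy i j with h | h | h
  · rw [Matrix.one_apply_ne h.ne]
    apply Finset.sum_eq_zero
    intro k _
    rcases le_or_gt k i with hk | hk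
    · have : (Gmat n d) k j = 0 := by
        simp only [Gmat, Matrix.of_apply]
        rw [if_neg (by exact fun e => absurd (e ▸ hk) (not_le.2 h)),
          if_neg (not_lt.2 (hk.trans h.le))]
      rw [this, mul_zero]
    · have : (Dmat n d) i k = 0 := by
        simp only [Dmat, Matrix.of_apply]; rw [if_pos hk]
      rw [this, zero_mul]
  · subst h
    rw [Matrix.one_apply_eq]
    rw [Finset.sum_eq_single i]
    · simp [Dmat, Gmat, hd i]
    · intro k _ hk
      rcases lt_or_gt_of_ne hk with h' | h'
      · have : (Gmat n d) k i = 0 := by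
          simp only [Gmat, Matrix.of_apply]
          rw [if_neg hk, if_neg (not_lt.2 h'.le)]
        rw [this, mul_zero]
      · have : (Dmat n d) i k = 0 := by
          simp only [Dmat, Matrix.of_apply]; rw [if_pos h']
        rw [this, zero_mul]
    · intro h; exact absurd (Finset.mem_univ i) h
  · -- j < i
    rw [Matrix.one_apply_ne (h.ne' : i ≠ j)]
    have hvanish : ∀ k ∈ Finset.univ, k ∉ Finset.Icc j i →
        (Dmat n d) i k * (Gmat n d) k j = 0 := by
      intro k _ hk
      rw [Finset.mem_Icc, not_and_or] at hk
      rcases hk with hk | hk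
      · have : (Gmat n d) k j = 0 := by
          simp only [Gmat, Matrix.of_apply]
          rw [if_neg (fun e => hk (le_of_eq e.symm)), if_neg (fun e => hk e.le)]
        rw [this, mul_zero]
      · have : (Dmat n d) i k = 0 := by
          simp only [Dmat, Matrix.of_apply]; rw [if_pos (not_le.1 hk)]
        rw [this, zero_mul]
    rw [← Finset.sum_subset (Finset.subset_univ (Finset.Icc j i)) hvanish]
    rw [← Finset.Ioc_insert_left h.le, ← Finset.Ioo_insert_right h]
    rw [Finset.sum_insert (by simp [h.ne]), Finset.sum_insert (by simp)]
    have hDjj : (Dmat n d) i j * (Gmat n d) j j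
        = -(∏ m ∈ Finset.Ioo j i, (1 - d m)) * d i := by
      simp only [Dmat, Gmat, Matrix.of_apply]
      rw [if_neg (not_lt.2 h.le), if_neg (ne_of_gt h), if_pos trivial]
      field_simp [hd j]
    have hDii : (Dmat n d) i i * (Gmat n d) i j = d i := by
      simp only [Dmat, Gmat, Matrix.of_apply]
      rw [if_pos trivial, if_neg (ne_of_gt h), if_pos h, if_neg (lt_irrefl i)]
      ring
    have hmid : ∑ k ∈ Finset.Ioo j i, (Dmat n d) i k * (Gmat n d) k j
        = -d i * (1 - ∏ m ∈ Finset.Ioo j i, (1 - d m)) := by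
      rw [← tele_min d (Finset.Ioo j i), Finset.mul_sum]
      apply Finset.sum_congr rfl
      intro k hk
      rw [Finset.mem_Ioo] at hk
      have hset : (Finset.Ioo j i).filter (fun m => k < m) = Finset.Ioo k i := by
        ext m
        simp only [Finset.mem_filter, Finset.mem_Ioo]
        exact ⟨fun ⟨⟨_, h2⟩, h3⟩ => ⟨h3, h2⟩, fun ⟨h1, h2⟩ => ⟨⟨hk.1.trans h1, h2⟩, h1⟩⟩
      simp only [Dmat, Gmat, Matrix.of_apply]
      rw [if_neg (not_lt.2 hk.2.le), if_neg (ne_of_gt hk.2),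
        if_neg (ne_of_gt hk.1), if_pos hk.1, hset]
      ring
    rw [hDjj, hDii, hmid]
    ring

lemma Dcolsum (n : ℕ) (hn : 0 < n) (d : Fin n → ℝ) (hdn : d ⟨n - 1, by omega⟩ = 1)
    (k : Fin n) :
    ∑ i, Dmat n d i k = if (k : ℕ) = n - 1 then 1 else 0 := by
  classical
  have hvanish : ∀ i ∈ Finset.univ, i ∉ Finset.Ici k → Dmat n d i k = 0 := by
    intro i _ hi
    rw [Finset.mem_Ici, not_le] at hi
    simp only [Dmat, Matrix.of_apply]; rw [if_pos hi]
  rw [← Finset.sum_subset (Finset.subset_univ (Finset.Ici k)) hvanish,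
    ← Finset.Ioi_insert, Finset.sum_insert (by simp)]
  have hdiag : Dmat n d k k = d k := by
    simp [Dmat]
  have hmid : ∑ i ∈ Finset.Ioi k, Dmat n d i k
      = -d k * (1 - ∏ m ∈ Finset.Ioi k, (1 - d m)) := by
    rw [← tele_max d (Finset.Ioi k), Finset.mul_sum]
    apply Finset.sum_congr rfl
    intro i hi
    rw [Finset.mem_Ioi] at hi
    have hset : (Finset.Ioi k).filter (fun m => m < i) = Finset.Ioo k i := by
      ext m
      simp [Finset.mem_filter, Finset.mem_Ioo, and_comm]
    simp only [Dmat, Matrix.of_apply]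
    rw [if_neg (not_lt.2 hi.le), if_neg (ne_of_gt hi), hset]
    ring
  rw [hdiag, hmid]
  by_cases hk : (k : ℕ) = n - 1
  · have hkeq : k = ⟨n - 1, by omega⟩ := Fin.ext hk
    have hIoi : Finset.Ioi k = ∅ := by
      rw [Finset.eq_empty_iff_forall_notMem]
      intro m hm
      rw [Finset.mem_Ioi] at hm
      have := m.isLt
      rw [Fin.lt_def, hk] at hm
      omega
    rw [if_pos hk, hIoi, hkeq, hdn]
    simp
  · have hlast : (⟨n - 1, by omega⟩ : Fin n) ∈ Finset.Ioi k := by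
      rw [Finset.mem_Ioi, Fin.lt_def]
      have := k.isLt
      simp only []
      omega
    have hprod : ∏ m ∈ Finset.Ioi k, (1 - d m) = 0 :=
      Finset.prod_eq_zero hlast (by rw [hdn]; ring)
    rw [if_neg hk, hprod]
    ring

lemma Tmul_apply {n : ℕ} (M : Matrix (Fin n) (Fin n) ℝ) (i j : Fin n) :
    (Tmat n * M) i j = M i.rev j := by
  rw [Matrix.mul_apply]
  rw [Finset.sum_eq_single i.rev]
  · have hc : (i : ℕ) + (i.rev : ℕ) + 1 = n := by
      rw [Fin.val_rev]; have := i.isLt; omega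
    simp only [Tmat, Matrix.of_apply, if_pos hc, one_mul]
  · intro a _ ha
    have hc : ¬ ((i : ℕ) + (a : ℕ) + 1 = n) := by
      intro h
      apply ha
      apply Fin.ext
      rw [Fin.val_rev]
      omega
    simp only [Tmat, Matrix.of_apply, if_neg hc, zero_mul]
  · intro h; exact absurd (Finset.mem_univ _) h

lemma mulT_apply {n : ℕ} (M : Matrix (Fin n) (Fin n) ℝ) (i j : Fin n) :
    (M * Tmat n) i j = M i j.rev := by
  rw [Matrix.mul_apply]
  rw [Finset.sum_eq_single j.rev]
  · have hc : (j.rev : ℕ) + (j : ℕ) + 1 = n := by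
      rw [Fin.val_rev]; have := j.isLt; omega
    simp only [Tmat, Matrix.of_apply, if_pos hc, mul_one]
  · intro a _ ha
    have hc : ¬ ((a : ℕ) + (j : ℕ) + 1 = n) := by
      intro h
      apply ha
      apply Fin.ext
      rw [Fin.val_rev]
      omega
    simp only [Tmat, Matrix.of_apply, if_neg hc, mul_zero]
  · intro h; exact absurd (Finset.mem_univ _) h

theorem stmt_12 (n : ℕ) (hn : 2 ≤ n) (c d : Fin n → ℝ)
    (hc1 : c ⟨0, by omega⟩ = 0) (hcn : c ⟨n - 1, by omega⟩ = 1)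
    (hd1 : d ⟨0, by omega⟩ = 1) (hdn : d ⟨n - 1, by omega⟩ = 1)
    (hd : ∀ i : Fin n, d i ≠ 0)
    (A Atil : Matrix (Fin n) (Fin n) ℝ)
    (hA : A = Fmat n c * Dmat n d)
    (hAtil : Atil = Tmat n * (Dmat n d * A * Gmat n d)ᵀ * Tmat n) :
    ∀ i : Fin n, ∑ j : Fin n, Atil i j = 1 - c i.rev := by
  intro i
  have hDG : Dmat n d * Gmat n d = 1 := DG_eq_one n d hd
  have hDAG : Dmat n d * A * Gmat n d = Dmat n d * Fmat n c := by
    rw [hA, ← Matrix.mul_assoc, Matrix.mul_assoc (Dmat n d * Fmat n c), hDG,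
      Matrix.mul_one]
  have hAt : ∀ j, Atil i j = (Dmat n d * Fmat n c) j.rev i.rev := by
    intro j
    rw [hAtil, hDAG, mulT_apply, Tmul_apply, Matrix.transpose_apply]
  rw [Finset.sum_congr rfl (fun j _ => hAt j)]
  have hre : ∑ j : Fin n, (Dmat n d * Fmat n c) j.rev i.rev
      = ∑ j, (Dmat n d * Fmat n c) j i.rev :=
    Fintype.sum_bijective Fin.rev Fin.rev_bijective _ _ (fun j => rfl)
  rw [hre]
  have hsw : ∑ j, (Dmat n d * Fmat n c) j i.rev
      = ∑ k, (∑ j, Dmat n d j k) * Fmat n c k i.rev := by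
    simp only [Matrix.mul_apply]
    rw [Finset.sum_comm]
    simp [Finset.sum_mul]
  rw [hsw]
  have hcol := Dcolsum n (by omega) d hdn
  rw [Finset.sum_congr rfl (fun k _ => by rw [hcol k])]
  rw [Finset.sum_eq_single (⟨n - 1, by omega⟩ : Fin n)]
  · rw [if_pos rfl, one_mul]
    have hile : (i.rev : ℕ) ≤ n - 1 := by have := i.rev.isLt; omega
    rcases eq_or_lt_of_le hile with he | hl
    · have heq : i.rev = ⟨n - 1, by omega⟩ := Fin.ext he
      rw [heq]
      simp [Fmat, hcn]
    · have hlt : i.rev < (⟨n - 1, by omega⟩ : Fin n) := hl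
      simp only [Fmat, Matrix.of_apply, if_pos hlt, hcn]
  · intro k _ hk
    rw [if_neg (fun e => hk (Fin.ext e)), zero_mul]
  · intro h; exact absurd (Finset.mem_univ _) h
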